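/- Fix a pmf ρ on X0 and a channel Γ : X1 → (pmf on Y). For any t ≥ 1 and any (ρ,Γ)-admissible pmfs P_1, …, P_t on X0 × X1 × X2 × Y, the time-averaged distribution P̄ = (1/t)·∑_{i=1}^t P_i is (ρ,Γ)-admissible and satisfies Φ(P̄) ≤ (1/t)·∑_{i=1}^t Φ(P_i); equivalently, I_{P̄}(X1;Y|X0,X2) − I_{P̄}(X0;X2) ≥ (1/t)·∑_{i=1}^t [ I_{P_i}(X1;Y|X0,X2) − I_{P_i}(X0;X2) ]. -/

import Mathlib

open scoped BigOperators

/-- A probability mass function on a finite set. -/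
def IsPmf {S : Type*} [Fintype S] (q : S → ℝ) : Prop :=
  (∀ s, 0 ≤ q s) ∧ ∑ s, q s = 1

section Defs

set_option linter.unusedSectionVars false

variable {X0 X1 X2 Y : Type*} [Fintype X0] [Fintype X1] [Fintype X2] [Fintype Y]

/-- Marginal on `X0`. -/
noncomputable def margX0 (Q : X0 × X1 × X2 × Y → ℝ) (x0 : X0) : ℝ :=
  ∑ x1, ∑ x2, ∑ y, Q (x0, x1, x2, y)

/-- Marginal on `X2`. -/
noncomputable def margX2 (Q : X0 × X1 × X2 × Y → ℝ) (x2 : X2) : ℝ :=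
  ∑ x0, ∑ x1, ∑ y, Q (x0, x1, x2, y)

/-- Marginal on `(X0, X2)`. -/
noncomputable def margX0X2 (Q : X0 × X1 × X2 × Y → ℝ) (x0 : X0) (x2 : X2) : ℝ :=
  ∑ x1, ∑ y, Q (x0, x1, x2, y)

/-- Marginal on `(X0, X2, Y)`. -/
noncomputable def margX0X2Y (Q : X0 × X1 × X2 × Y → ℝ) (x0 : X0) (x2 : X2) (y : Y) : ℝ :=
  ∑ x1, Q (x0, x1, x2, y)

/-- Marginal on `(X0, X1, X2)`. -/
noncomputable def margX0X1X2 (Q : X0 × X1 × X2 × Y → ℝ) (x0 : X0) (x1 : X1) (x2 : X2) : ℝ :=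
  ∑ y, Q (x0, x1, x2, y)

/-- Entropy `H_Q(X0)` (natural log, `0 log 0 = 0` holds by `Real.log 0 = 0`). -/
noncomputable def H_X0 (Q : X0 × X1 × X2 × Y → ℝ) : ℝ :=
  -∑ x0, margX0 Q x0 * Real.log (margX0 Q x0)

/-- Entropy `H_Q(X2)`. -/
noncomputable def H_X2 (Q : X0 × X1 × X2 × Y → ℝ) : ℝ :=
  -∑ x2, margX2 Q x2 * Real.log (margX2 Q x2)

/-- Joint entropy `H_Q(X0, X2)`. -/
noncomputable def H_X0X2 (Q : X0 × X1 × X2 × Y → ℝ) : ℝ :=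
  -∑ x0, ∑ x2, margX0X2 Q x0 x2 * Real.log (margX0X2 Q x0 x2)

/-- Conditional entropy `H_Q(Y, X0 | X2)` (terms with zero mass contribute `0`
since `0 * log _ = 0` and `Real.log 0 = 0`, `0 / 0 = 0`). -/
noncomputable def HcondYX0_X2 (Q : X0 × X1 × X2 × Y → ℝ) : ℝ :=
  -∑ x0, ∑ x2, ∑ y,
    margX0X2Y Q x0 x2 y * Real.log (margX0X2Y Q x0 x2 y / margX2 Q x2)

/-- Conditional entropy `H_Q(Y | X0, X2)`. -/
noncomputable def HcondY_X0X2 (Q : X0 × X1 × X2 × Y → ℝ) : ℝ :=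
  -∑ x0, ∑ x2, ∑ y,
    margX0X2Y Q x0 x2 y * Real.log (margX0X2Y Q x0 x2 y / margX0X2 Q x0 x2)

/-- Conditional entropy `H_Q(Y | X0, X1, X2)`. -/
noncomputable def HcondY_X0X1X2 (Q : X0 × X1 × X2 × Y → ℝ) : ℝ :=
  -∑ x0, ∑ x1, ∑ x2, ∑ y,
    Q (x0, x1, x2, y) * Real.log (Q (x0, x1, x2, y) / margX0X1X2 Q x0 x1 x2)

/-- Mutual information `I_Q(X0; X2) = H(X0) + H(X2) - H(X0, X2)`. -/
noncomputable def mutI_X0X2 (Q : X0 × X1 × X2 × Y → ℝ) : ℝ :=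
  H_X0 Q + H_X2 Q - H_X0X2 Q

/-- Conditional mutual information `I_Q(X1; Y | X0, X2)`. -/
noncomputable def condMutI_X1Y_X0X2 (Q : X0 × X1 × X2 × Y → ℝ) : ℝ :=
  HcondY_X0X2 Q - HcondY_X0X1X2 Q

/-- `Φ(Q) = I_Q(X0; X2) - I_Q(X1; Y | X0, X2)`. -/
noncomputable def Phi (Q : X0 × X1 × X2 × Y → ℝ) : ℝ :=
  mutI_X0X2 Q - condMutI_X1Y_X0X2 Q

/-- A channel `Γ : X1 → Δ(Y)`. -/
def IsChannel (Γ : X1 → Y → ℝ) : Prop :=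
  ∀ x1, (∀ y, 0 ≤ Γ x1 y) ∧ ∑ y, Γ x1 y = 1

/-- `(ρ, Γ)`-admissibility: `Q` is a pmf whose `X0`-marginal is `ρ` and which
factorizes through the channel `Γ`. -/
def IsAdmissible (ρ : X0 → ℝ) (Γ : X1 → Y → ℝ) (Q : X0 × X1 × X2 × Y → ℝ) : Prop :=
  IsPmf Q ∧ (∀ x0, margX0 Q x0 = ρ x0) ∧
    ∀ x0 x1 x2 y, Q (x0, x1, x2, y) = Γ x1 y * margX0X1X2 Q x0 x1 x2

end Defs


lemma logsum_aux {ι : Type*} [Fintype ι] (a b : ι → ℝ) (ha : ∀ i, 0 ≤ a i)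
    (hb : ∀ i, 0 ≤ b i) (hab : ∀ i, 0 < a i → 0 < b i) :
    (∑ i, a i) * Real.log ((∑ i, a i) / (∑ i, b i)) ≤ ∑ i, a i * Real.log (a i / b i) := by
  rcases (Finset.sum_nonneg fun i _ => ha i).eq_or_lt with hA | hA
  · have h0 : ∀ i ∈ Finset.univ, a i = 0 :=
      (Finset.sum_eq_zero_iff_of_nonneg fun i _ => ha i).mp hA.symm
    rw [← hA, zero_mul]
    exact le_of_eq (Finset.sum_eq_zero fun i hi => by rw [h0 i hi, zero_mul]).symm
  · set A := ∑ i, a i with hAdef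
    set B := ∑ i, b i with hBdef
    obtain ⟨i0, hi0⟩ : ∃ i, 0 < a i := by
      by_contra h
      push_neg at h
      have : A = 0 := le_antisymm (Finset.sum_nonpos fun i _ => h i) hA.le
      exact absurd this hA.ne'
    have hB : 0 < B :=
      lt_of_lt_of_le (hab i0 hi0)
        (Finset.single_le_sum (fun i _ => hb i) (Finset.mem_univ i0))
    have key : ∀ i, a i * Real.log (A / B) + a i - b i * (A / B) ≤ a i * Real.log (a i / b i) := by
      intro i
      rcases (ha i).eq_or_lt with h | h
      · rw [← h, zero_mul, zero_mul, zero_add]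
        have : 0 ≤ b i * (A / B) := mul_nonneg (hb i) (div_nonneg hA.le hB.le)
        linarith
      · have hbi : 0 < b i := hab i h
        have hx : 0 < (b i * A) / (a i * B) := by positivity
        have hlog := Real.log_le_sub_one_of_pos hx
        have hid : Real.log ((b i * A) / (a i * B)) = Real.log (A / B) - Real.log (a i / b i) := by
          rw [Real.log_div (by positivity) (by positivity), Real.log_mul hbi.ne' hA.ne',
            Real.log_mul h.ne' hB.ne', Real.log_div hA.ne' hB.ne', Real.log_div h.ne' hbi.ne']
          ring
        rw [hid] at hlog
        have h3 : a i * (Real.log (A / B) - Real.log (a i / b i)) ≤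
            a i * ((b i * A) / (a i * B) - 1) := mul_le_mul_of_nonneg_left hlog h.le
        have hid2 : a i * ((b i * A) / (a i * B)) = b i * (A / B) := by
          field_simp
        rw [mul_sub, mul_sub, hid2, mul_one] at h3
        linarith
    calc A * Real.log (A / B) = ∑ i, (a i * Real.log (A / B) + a i - b i * (A / B)) := by
          rw [Finset.sum_sub_distrib, Finset.sum_add_distrib, ← Finset.sum_mul, ← Finset.sum_mul,
            ← hAdef, ← hBdef, mul_comm B (A / B), div_mul_cancel₀ A hB.ne']
          ring
      _ ≤ ∑ i, a i * Real.log (a i / b i) := Finset.sum_le_sum fun i _ => key i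

section AuxLemmas

lemma lin1_aux {α ι : Type*} [Fintype α] [Fintype ι] (c : ℝ) (f : α → ι → ℝ) :
    ∑ a, c * ∑ i, f a i = c * ∑ i, ∑ a, f a i := by
  rw [← Finset.mul_sum, Finset.sum_comm]

lemma lin2_aux {α β ι : Type*} [Fintype α] [Fintype β] [Fintype ι] (c : ℝ)
    (f : α → β → ι → ℝ) :
    ∑ a, ∑ b, c * ∑ i, f a b i = c * ∑ i, ∑ a, ∑ b, f a b i := by
  have h : ∀ a, ∑ b, c * ∑ i, f a b i = c * ∑ i, ∑ b, f a b i :=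
    fun a => lin1_aux c (f a)
  simp only [h]
  exact lin1_aux c fun a i => ∑ b, f a b i

lemma lin3_aux {α β γ ι : Type*} [Fintype α] [Fintype β] [Fintype γ] [Fintype ι] (c : ℝ)
    (f : α → β → γ → ι → ℝ) :
    ∑ a, ∑ b, ∑ g, c * ∑ i, f a b g i = c * ∑ i, ∑ a, ∑ b, ∑ g, f a b g i := by
  have h : ∀ a, ∑ b, ∑ g, c * ∑ i, f a b g i = c * ∑ i, ∑ b, ∑ g, f a b g i :=
    fun a => lin2_aux c (f a)
  simp only [h]
  exact lin1_aux c fun a i => ∑ b, ∑ g, f a b g i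

set_option linter.unusedSectionVars false

variable {X0 X1 X2 Y : Type*} [Fintype X0] [Fintype X1] [Fintype X2] [Fintype Y]

lemma margX0_eq_sum (Q : X0 × X1 × X2 × Y → ℝ) (x0 : X0) :
    margX0 Q x0 = ∑ x2, margX0X2 Q x0 x2 := by
  simp only [margX0, margX0X2]
  exact Finset.sum_comm

lemma margX2_eq_sum (Q : X0 × X1 × X2 × Y → ℝ) (x2 : X2) :
    margX2 Q x2 = ∑ x0, margX0X2 Q x0 x2 := rfl

lemma margX0X2_eq_sum (Q : X0 × X1 × X2 × Y → ℝ) (x0 : X0) (x2 : X2) :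
    margX0X2 Q x0 x2 = ∑ y, margX0X2Y Q x0 x2 y := by
  simp only [margX0X2, margX0X2Y]
  exact Finset.sum_comm

lemma margX0X2_nonneg {Q : X0 × X1 × X2 × Y → ℝ} (hQ : ∀ v, 0 ≤ Q v) (x0 : X0) (x2 : X2) :
    0 ≤ margX0X2 Q x0 x2 :=
  Finset.sum_nonneg fun _ _ => Finset.sum_nonneg fun _ _ => hQ _

lemma margX0X2Y_nonneg {Q : X0 × X1 × X2 × Y → ℝ} (hQ : ∀ v, 0 ≤ Q v) (x0 : X0) (x2 : X2)
    (y : Y) : 0 ≤ margX0X2Y Q x0 x2 y :=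
  Finset.sum_nonneg fun _ _ => hQ _

lemma margX0X2_le_margX0 {Q : X0 × X1 × X2 × Y → ℝ} (hQ : ∀ v, 0 ≤ Q v) (x0 : X0) (x2 : X2) :
    margX0X2 Q x0 x2 ≤ margX0 Q x0 := by
  rw [margX0_eq_sum]
  exact Finset.single_le_sum (fun x2' _ => margX0X2_nonneg hQ x0 x2') (Finset.mem_univ x2)

lemma margX0X2_le_margX2 {Q : X0 × X1 × X2 × Y → ℝ} (hQ : ∀ v, 0 ≤ Q v) (x0 : X0) (x2 : X2) :
    margX0X2 Q x0 x2 ≤ margX2 Q x2 := by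
  rw [margX2_eq_sum]
  exact Finset.single_le_sum (fun x0' _ => margX0X2_nonneg hQ x0' x2) (Finset.mem_univ x0)

lemma margX0X2Y_le_margX0X2 {Q : X0 × X1 × X2 × Y → ℝ} (hQ : ∀ v, 0 ≤ Q v) (x0 : X0)
    (x2 : X2) (y : Y) : margX0X2Y Q x0 x2 y ≤ margX0X2 Q x0 x2 := by
  rw [margX0X2_eq_sum]
  exact Finset.single_le_sum (fun y' _ => margX0X2Y_nonneg hQ x0 x2 y') (Finset.mem_univ y)

/-- KL-form of the mutual information `I(X0;X2)`. -/
noncomputable def T1aux (Q : X0 × X1 × X2 × Y → ℝ) : ℝ :=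
  ∑ x0, ∑ x2, margX0X2 Q x0 x2 *
    Real.log (margX0X2 Q x0 x2 / (margX0 Q x0 * margX2 Q x2))

/-- `-H(Y | X0, X2)` in KL form. -/
noncomputable def T2aux (Q : X0 × X1 × X2 × Y → ℝ) : ℝ :=
  ∑ x0, ∑ x2, ∑ y, margX0X2Y Q x0 x2 y *
    Real.log (margX0X2Y Q x0 x2 y / margX0X2 Q x0 x2)

/-- The linear functional `-H(Y | X0,X1,X2)` (for admissible `Q`). -/
noncomputable def LLaux (Γ : X1 → Y → ℝ) (Q : X0 × X1 × X2 × Y → ℝ) : ℝ :=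
  ∑ x0, ∑ x1, ∑ x2, margX0X1X2 Q x0 x1 x2 * ∑ y, Γ x1 y * Real.log (Γ x1 y)

lemma mutI_eq_T1 (Q : X0 × X1 × X2 × Y → ℝ) (hQ : ∀ v, 0 ≤ Q v) :
    mutI_X0X2 Q = T1aux Q := by
  have key : ∀ x0 x2, margX0X2 Q x0 x2 *
      Real.log (margX0X2 Q x0 x2 / (margX0 Q x0 * margX2 Q x2)) =
      margX0X2 Q x0 x2 * Real.log (margX0X2 Q x0 x2)
      - margX0X2 Q x0 x2 * Real.log (margX0 Q x0)
      - margX0X2 Q x0 x2 * Real.log (margX2 Q x2) := by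
    intro x0 x2
    rcases (margX0X2_nonneg hQ x0 x2).eq_or_lt with h | h
    · rw [← h]; simp
    · have h0 : 0 < margX0 Q x0 := lt_of_lt_of_le h (margX0X2_le_margX0 hQ x0 x2)
      have h2 : 0 < margX2 Q x2 := lt_of_lt_of_le h (margX0X2_le_margX2 hQ x0 x2)
      rw [Real.log_div h.ne' (by positivity), Real.log_mul h0.ne' h2.ne']
      ring
  have e0 : ∑ x0, margX0 Q x0 * Real.log (margX0 Q x0) =
      ∑ x0, ∑ x2, margX0X2 Q x0 x2 * Real.log (margX0 Q x0) :=
    Finset.sum_congr rfl fun x0 _ => by rw [← Finset.sum_mul, ← margX0_eq_sum]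
  have e2 : ∑ x2, margX2 Q x2 * Real.log (margX2 Q x2) =
      ∑ x0, ∑ x2, margX0X2 Q x0 x2 * Real.log (margX2 Q x2) :=
    calc ∑ x2, margX2 Q x2 * Real.log (margX2 Q x2)
        = ∑ x2, ∑ x0, margX0X2 Q x0 x2 * Real.log (margX2 Q x2) :=
          Finset.sum_congr rfl fun x2 _ => by rw [← Finset.sum_mul, ← margX2_eq_sum]
      _ = ∑ x0, ∑ x2, margX0X2 Q x0 x2 * Real.log (margX2 Q x2) := Finset.sum_comm
  unfold T1aux
  simp only [key]
  rw [mutI_X0X2, H_X0, H_X2, H_X0X2, e0, e2]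
  simp only [Finset.sum_sub_distrib]
  ring

lemma HcondY_X0X1X2_eq {ρ : X0 → ℝ} {Γ : X1 → Y → ℝ} {Q : X0 × X1 × X2 × Y → ℝ}
    (h : IsAdmissible ρ Γ Q) : HcondY_X0X1X2 Q = -(LLaux Γ Q) := by
  obtain ⟨⟨hQ0, -⟩, -, hfac⟩ := h
  unfold HcondY_X0X1X2 LLaux
  rw [neg_eq_iff_eq_neg, neg_neg]
  refine (Finset.sum_congr rfl fun x0 _ => Finset.sum_congr rfl fun x1 _ =>
    Finset.sum_congr rfl fun x2 _ => ?_).symm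
  have hm : 0 ≤ margX0X1X2 Q x0 x1 x2 := Finset.sum_nonneg fun _ _ => hQ0 _
  rcases hm.eq_or_lt with h | h
  · have hz : ∀ y, Q (x0, x1, x2, y) = 0 := fun y => by
      rw [hfac x0 x1 x2 y, ← h, mul_zero]
    rw [← h, zero_mul]
    exact (Finset.sum_eq_zero fun y _ => by rw [hz y, zero_mul]).symm
  · rw [Finset.mul_sum]
    refine Finset.sum_congr rfl fun y _ => ?_
    rw [hfac x0 x1 x2 y, mul_div_assoc, div_self h.ne', mul_one]
    ring

lemma Phi_eq {ρ : X0 → ℝ} {Γ : X1 → Y → ℝ} {Q : X0 × X1 × X2 × Y → ℝ}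
    (h : IsAdmissible ρ Γ Q) : Phi Q = T1aux Q + T2aux Q - LLaux Γ Q := by
  have h1 := mutI_eq_T1 Q h.1.1
  have h2 := HcondY_X0X1X2_eq h
  have h3 : HcondY_X0X2 Q = -(T2aux Q) := by
    unfold HcondY_X0X2 T2aux
    rfl
  rw [Phi, condMutI_X1Y_X0X2, h1, h2, h3]
  ring

lemma margX0_lin {t : ℕ} (c : ℝ) (P : Fin t → (X0 × X1 × X2 × Y → ℝ)) (x0 : X0) :
    margX0 (fun v => c * ∑ i, P i v) x0 = c * ∑ i, margX0 (P i) x0 := by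
  simp only [margX0]
  exact lin3_aux c fun x1 x2 y i => P i (x0, x1, x2, y)

lemma margX2_lin {t : ℕ} (c : ℝ) (P : Fin t → (X0 × X1 × X2 × Y → ℝ)) (x2 : X2) :
    margX2 (fun v => c * ∑ i, P i v) x2 = c * ∑ i, margX2 (P i) x2 := by
  simp only [margX2]
  exact lin3_aux c fun x0 x1 y i => P i (x0, x1, x2, y)

lemma margX0X2_lin {t : ℕ} (c : ℝ) (P : Fin t → (X0 × X1 × X2 × Y → ℝ)) (x0 : X0) (x2 : X2) :
    margX0X2 (fun v => c * ∑ i, P i v) x0 x2 = c * ∑ i, margX0X2 (P i) x0 x2 := by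
  simp only [margX0X2]
  exact lin2_aux c fun x1 y i => P i (x0, x1, x2, y)

lemma margX0X2Y_lin {t : ℕ} (c : ℝ) (P : Fin t → (X0 × X1 × X2 × Y → ℝ)) (x0 : X0) (x2 : X2)
    (y : Y) : margX0X2Y (fun v => c * ∑ i, P i v) x0 x2 y = c * ∑ i, margX0X2Y (P i) x0 x2 y := by
  simp only [margX0X2Y]
  exact lin1_aux c fun x1 i => P i (x0, x1, x2, y)

lemma margX0X1X2_lin {t : ℕ} (c : ℝ) (P : Fin t → (X0 × X1 × X2 × Y → ℝ)) (x0 : X0) (x1 : X1)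
    (x2 : X2) : margX0X1X2 (fun v => c * ∑ i, P i v) x0 x1 x2
      = c * ∑ i, margX0X1X2 (P i) x0 x1 x2 := by
  simp only [margX0X1X2]
  exact lin1_aux c fun y i => P i (x0, x1, x2, y)

lemma margX0_nonneg {Q : X0 × X1 × X2 × Y → ℝ} (hQ : ∀ v, 0 ≤ Q v) (x0 : X0) :
    0 ≤ margX0 Q x0 :=
  Finset.sum_nonneg fun _ _ => Finset.sum_nonneg fun _ _ => Finset.sum_nonneg fun _ _ => hQ _

lemma margX2_nonneg {Q : X0 × X1 × X2 × Y → ℝ} (hQ : ∀ v, 0 ≤ Q v) (x2 : X2) :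
    0 ≤ margX2 Q x2 :=
  Finset.sum_nonneg fun _ _ => Finset.sum_nonneg fun _ _ => Finset.sum_nonneg fun _ _ => hQ _

end AuxLemmas

/-- the time-averaged distribution of `(ρ, Γ)`-admissible distributions
`P_1, …, P_t` is `(ρ, Γ)`-admissible and satisfies `Φ(P̄) ≤ (1/t) ∑ᵢ Φ(Pᵢ)`. -/
theorem phi_time_average_le
    {X0 X1 X2 Y : Type*} [Fintype X0] [Fintype X1] [Fintype X2] [Fintype Y]
    (ρ : X0 → ℝ) (hρ : IsPmf ρ) (Γ : X1 → Y → ℝ) (hΓ : IsChannel Γ)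
    (t : ℕ) (ht : 1 ≤ t) (P : Fin t → (X0 × X1 × X2 × Y → ℝ))
    (hP : ∀ i, IsAdmissible ρ Γ (P i)) :
    IsAdmissible ρ Γ (fun v => (1 / (t : ℝ)) * ∑ i, P i v) ∧
    Phi (fun v => (1 / (t : ℝ)) * ∑ i, P i v) ≤ (1 / (t : ℝ)) * ∑ i, Phi (P i) := by
  have htpos : (0:ℝ) < (t:ℝ) := by exact_mod_cast Nat.lt_of_lt_of_le Nat.zero_lt_one ht
  have htR : (t:ℝ) ≠ 0 := ne_of_gt htpos
  set c : ℝ := 1 / (t:ℝ) with hc_def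
  have hc : (0:ℝ) < c := by positivity
  have hQ0 : ∀ i, ∀ v, 0 ≤ P i v := fun i => (hP i).1.1
  have hadm : IsAdmissible ρ Γ (fun v => c * ∑ i, P i v) := by
    refine ⟨⟨fun v => mul_nonneg hc.le (Finset.sum_nonneg fun i _ => hQ0 i v), ?_⟩, ?_, ?_⟩
    · show ∑ v : X0 × X1 × X2 × Y, (c * ∑ i, P i v) = 1
      rw [← Finset.mul_sum, Finset.sum_comm]
      rw [Finset.sum_congr rfl fun i _ => (hP i).1.2]
      simp only [Finset.sum_const, Finset.card_univ, Fintype.card_fin, nsmul_eq_mul, mul_one]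
      rw [hc_def, one_div, inv_mul_cancel₀ htR]
    · intro x0
      rw [margX0_lin, Finset.sum_congr rfl fun i _ => (hP i).2.1 x0]
      simp only [Finset.sum_const, Finset.card_univ, Fintype.card_fin, nsmul_eq_mul]
      rw [hc_def]
      field_simp
    · intro x0 x1 x2 y
      show c * ∑ i, P i (x0, x1, x2, y) = _
      rw [margX0X1X2_lin, Finset.sum_congr rfl fun i _ => (hP i).2.2 x0 x1 x2 y,
        ← Finset.mul_sum]
      ring
  refine ⟨hadm, ?_⟩
  have hT1 : T1aux (fun v => c * ∑ i, P i v) ≤ c * ∑ i, T1aux (P i) := by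
    unfold T1aux
    refine le_trans (Finset.sum_le_sum fun x0 _ => Finset.sum_le_sum fun x2 _ => ?_)
      (le_of_eq (lin2_aux c fun x0 x2 i => margX0X2 (P i) x0 x2 *
        Real.log (margX0X2 (P i) x0 x2 / (margX0 (P i) x0 * margX2 (P i) x2))))
    have hA : margX0X2 (fun v => c * ∑ i, P i v) x0 x2 = c * ∑ i, margX0X2 (P i) x0 x2 :=
      margX0X2_lin c P x0 x2
    have hB : margX0 (fun v => c * ∑ i, P i v) x0 * margX2 (fun v => c * ∑ i, P i v) x2
        = c * ∑ i, margX0 (P i) x0 * margX2 (P i) x2 := by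
      have hmr : ∀ i : Fin t, margX0 (P i) x0 * margX2 (P i) x2 = ρ x0 * margX2 (P i) x2 :=
        fun i => by rw [(hP i).2.1 x0]
      rw [hadm.2.1 x0, margX2_lin]
      simp only [hmr]
      rw [← Finset.mul_sum]
      ring
    rw [hA, hB, mul_div_mul_left _ _ (ne_of_gt hc), mul_assoc]
    refine mul_le_mul_of_nonneg_left ?_ hc.le
    exact logsum_aux (fun i => margX0X2 (P i) x0 x2)
      (fun i => margX0 (P i) x0 * margX2 (P i) x2)
      (fun i => margX0X2_nonneg (hQ0 i) x0 x2)
      (fun i => mul_nonneg (margX0_nonneg (hQ0 i) x0) (margX2_nonneg (hQ0 i) x2))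
      (fun i hi => mul_pos (lt_of_lt_of_le hi (margX0X2_le_margX0 (hQ0 i) x0 x2))
        (lt_of_lt_of_le hi (margX0X2_le_margX2 (hQ0 i) x0 x2)))
  have hT2 : T2aux (fun v => c * ∑ i, P i v) ≤ c * ∑ i, T2aux (P i) := by
    unfold T2aux
    refine le_trans (Finset.sum_le_sum fun x0 _ => Finset.sum_le_sum fun x2 _ =>
        Finset.sum_le_sum fun y _ => ?_)
      (le_of_eq (lin3_aux c fun x0 x2 y i => margX0X2Y (P i) x0 x2 y *
        Real.log (margX0X2Y (P i) x0 x2 y / margX0X2 (P i) x0 x2)))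
    rw [margX0X2Y_lin c P x0 x2 y, margX0X2_lin c P x0 x2,
      mul_div_mul_left _ _ (ne_of_gt hc), mul_assoc]
    refine mul_le_mul_of_nonneg_left ?_ hc.le
    exact logsum_aux (fun i => margX0X2Y (P i) x0 x2 y)
      (fun i => margX0X2 (P i) x0 x2)
      (fun i => margX0X2Y_nonneg (hQ0 i) x0 x2 y)
      (fun i => margX0X2_nonneg (hQ0 i) x0 x2)
      (fun i hi => lt_of_lt_of_le hi (margX0X2Y_le_margX0X2 (hQ0 i) x0 x2 y))
  have hLL : LLaux Γ (fun v => c * ∑ i, P i v) = c * ∑ i, LLaux Γ (P i) := by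
    unfold LLaux
    have h : ∀ x0 x1 x2, margX0X1X2 (fun v => c * ∑ i, P i v) x0 x1 x2 *
        (∑ y, Γ x1 y * Real.log (Γ x1 y)) =
        c * ∑ i, margX0X1X2 (P i) x0 x1 x2 * (∑ y, Γ x1 y * Real.log (Γ x1 y)) := by
      intro x0 x1 x2
      rw [margX0X1X2_lin c P x0 x1 x2, mul_assoc, Finset.sum_mul]
    simp only [h]
    exact lin3_aux c fun x0 x1 x2 i =>
      margX0X1X2 (P i) x0 x1 x2 * ∑ y, Γ x1 y * Real.log (Γ x1 y)
  have hsum : ∑ i, Phi (P i) =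
      (∑ i, T1aux (P i)) + (∑ i, T2aux (P i)) - ∑ i, LLaux Γ (P i) := by
    rw [Finset.sum_congr rfl fun i _ => Phi_eq (hP i), Finset.sum_sub_distrib,
      Finset.sum_add_distrib]
  rw [Phi_eq hadm, hsum, mul_sub, mul_add, hLL]
  linarith
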